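/- Let y₁, …, y_n be independent with y_i ~ Poisson(T·μ_i), where 0 ≤ μ_i ≤ 1/n for all i and T > 2n log p. Let w ∈ ℝ^n satisfy Σ_{i=1}^n w_i² ≤ M/n for a constant M > 0. Then for t = √(32 M log p / T), P( |Σ_{i=1}^n (y_i − Tμ_i)·(n w_i / T)| > t/2 ) ≤ 2·exp(−t²T/(16M)) = 2/p². -/

import Mathlib

open scoped BigOperators ENNReal NNReal
open MeasureTheory ProbabilityTheory

lemma my_exp_quad {x : ℝ} (hx : x ≤ 1) : Real.exp x - 1 - x ≤ x ^ 2 := by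
  rcases le_or_gt (-1) x with h1 | h1
  · have hb := Real.exp_bound (x := x) (by rw [abs_le]; exact ⟨h1, hx⟩) (n := 2) (by norm_num)
    have : Real.exp x - (1 + x) ≤ |x| ^ 2 * ((2 + 1) / ((2 : ℕ).factorial * 2)) := by
      have := abs_le.mp hb
      have h2 : ∑ i ∈ Finset.range 2, x ^ i / (Nat.factorial i) = 1 + x := by
        simp [Finset.sum_range_succ]
      calc Real.exp x - (1 + x) = Real.exp x - ∑ i ∈ Finset.range 2, x ^ i / (Nat.factorial i) := by
            rw [h2]
        _ ≤ |Real.exp x - ∑ i ∈ Finset.range 2, x ^ i / (Nat.factorial i)| := le_abs_self _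
        _ ≤ |x| ^ 2 * ((2 + 1 : ℕ) / ((2 : ℕ).factorial * 2)) := hb
        _ ≤ |x| ^ 2 * ((2 + 1) / ((2 : ℕ).factorial * 2)) := by norm_num
    rw [sq_abs] at this
    have hf : ((Nat.factorial 2 : ℝ) * 2) = 4 := by norm_num [Nat.factorial]
    rw [hf] at this
    nlinarith [sq_nonneg x]
  · have h0 : Real.exp x ≤ 1 := Real.exp_le_one_iff.mpr (by linarith)
    nlinarith [Real.exp_pos x]

lemma my_poisson_hasSum (r : ℝ≥0) (s : ℝ) :
    HasSum (fun k : ℕ => poissonPMFReal r k * Real.exp (s * k))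
      (Real.exp ((r : ℝ) * (Real.exp s - 1))) := by
  have h : ∀ k : ℕ, poissonPMFReal r k * Real.exp (s * k)
      = Real.exp (-(r : ℝ)) * (((r : ℝ) * Real.exp s) ^ k / (Nat.factorial k)) := by
    intro k
    rw [poissonPMFReal, mul_pow, ← Real.exp_nat_mul, mul_comm (k : ℝ) s]
    ring
  have hsum : HasSum (fun k : ℕ => ((r : ℝ) * Real.exp s) ^ k / (Nat.factorial k))
      (Real.exp ((r : ℝ) * Real.exp s)) := by
    rw [Real.exp_eq_exp_ℝ]
    exact NormedSpace.expSeries_div_hasSum_exp _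
  have := hsum.mul_left (Real.exp (-(r : ℝ)))
  simp_rw [h]
  have e : Real.exp (-(r : ℝ)) * Real.exp ((r : ℝ) * Real.exp s)
      = Real.exp ((r : ℝ) * (Real.exp s - 1)) := by
    rw [← Real.exp_add]
    ring_nf
  rw [← e]
  exact this

lemma my_poisson_integrable (r : ℝ≥0) (s : ℝ) :
    Integrable (fun k : ℕ => Real.exp (s * k)) (poissonMeasure r) := by
  rw [integrable_poissonMeasure_iff]
  convert (my_poisson_hasSum r s).summable using 2 with k
  rw [Real.norm_eq_abs, abs_of_pos (Real.exp_pos _)]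
  rfl

lemma my_poisson_exp_int (r : ℝ≥0) (s : ℝ) :
    ∫ k, Real.exp (s * k) ∂(poissonMeasure r) = Real.exp ((r : ℝ) * (Real.exp s - 1)) := by
  rw [integral_poissonMeasure]
  exact (my_poisson_hasSum r s).tsum_eq

/-- Tail bound for a weighted sum of centered Poisson variables: if
`y_i ~ Poisson(T μ_i)` are independent with `0 ≤ μ_i ≤ 1/n`, `T > 2n log p`, and
`Σ w_i² ≤ M/n`, then for `t = √(32 M log p / T)`,
`P(|Σ (y_i − Tμ_i)(n w_i/T)| > t/2) ≤ 2 exp(−t²T/(16M)) = 2/p²`. -/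
theorem poisson_weighted_tail_bound
    {Ω : Type*} [MeasurableSpace Ω] (P : Measure Ω) [IsProbabilityMeasure P]
    (n p : ℕ) (hn : 0 < n) (hp : 2 ≤ p)
    (T M : ℝ) (hM : 0 < M)
    (μ : Fin n → ℝ) (hμ0 : ∀ i, 0 ≤ μ i) (hμ1 : ∀ i, μ i ≤ 1 / n)
    (hT : 2 * (n : ℝ) * Real.log p < T)
    (y : Fin n → Ω → ℕ)
    (hmeas : ∀ i, Measurable (y i))
    (hlaw : ∀ i, Measure.map (y i) P = poissonMeasure (T * μ i).toNNReal)
    (hindep : iIndepFun y P)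
    (w : Fin n → ℝ) (hw : ∑ i, (w i) ^ 2 ≤ M / n) :
    P {ω | Real.sqrt (32 * M * Real.log p / T) / 2 <
        |∑ i, ((y i ω : ℝ) - T * μ i) * ((n : ℝ) * w i / T)|} ≤
      ENNReal.ofReal (2 * Real.exp
        (-((Real.sqrt (32 * M * Real.log p / T)) ^ 2 * T / (16 * M)))) ∧
    2 * Real.exp (-((Real.sqrt (32 * M * Real.log p / T)) ^ 2 * T / (16 * M))) =
      2 / (p : ℝ) ^ 2 := by
  have hp1 : (1 : ℝ) < p := by exact_mod_cast lt_of_lt_of_le one_lt_two (by exact_mod_cast hp)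
  set L := Real.log p with hLdef
  have hL : 0 < L := Real.log_pos hp1
  have hn' : (0 : ℝ) < n := by exact_mod_cast hn
  have hT0 : 0 < T := lt_trans (by positivity) hT
  set t := Real.sqrt (32 * M * L / T) with htdef
  have ht2 : t ^ 2 = 32 * M * L / T := Real.sq_sqrt (by positivity)
  have ht0 : 0 ≤ t := Real.sqrt_nonneg _
  have hexp : t ^ 2 * T / (16 * M) = 2 * L := by
    rw [ht2]; field_simp; ring
  set s := t * T / (4 * M) with hsdef
  have hs0 : 0 ≤ s := by positivity
  have hs2 : s ^ 2 = 2 * L * T / M := by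
    have h1 : s ^ 2 = t ^ 2 * T ^ 2 / (16 * M ^ 2) := by rw [hsdef]; ring
    rw [h1, ht2]; field_simp; ring
  set X : Fin n → Ω → ℝ := fun i ω => ((y i ω : ℝ) - T * μ i) * ((n : ℝ) * w i / T)
    with hXdef
  have hlam0 : ∀ i, 0 ≤ T * μ i := fun i => mul_nonneg hT0.le (hμ0 i)
  have hr : ∀ i, ((T * μ i).toNNReal : ℝ) = T * μ i := fun i => Real.coe_toNNReal _ (hlam0 i)
  have hXmeas : ∀ i, Measurable (X i) := fun i =>
    (measurable_from_top (f := fun k : ℕ => ((k : ℝ) - T * μ i) * ((n : ℝ) * w i / T))).comp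
      (hmeas i)
  have hXindep : iIndepFun X P :=
    hindep.comp (fun i => fun k : ℕ => ((k : ℝ) - T * μ i) * ((n : ℝ) * w i / T))
      (fun i => measurable_from_top)
  have hw_i : ∀ i, w i ^ 2 ≤ M / n := fun i =>
    (Finset.single_le_sum (f := fun i => w i ^ 2) (fun i _ => sq_nonneg _)
      (Finset.mem_univ i)).trans hw
  have hint_y : ∀ (i : Fin n) (u : ℝ), Integrable (fun ω => Real.exp (u * (y i ω : ℝ))) P := by
    intro i u
    have h1 := my_poisson_integrable (T * μ i).toNNReal u
    rw [← hlaw i] at h1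
    exact (integrable_map_measure
      (measurable_from_top (f := fun k : ℕ => Real.exp (u * k))).aestronglyMeasurable
      (hmeas i).aemeasurable).mp h1
  have hEy : ∀ (i : Fin n) (u : ℝ),
      ∫ ω, Real.exp (u * (y i ω : ℝ)) ∂P = Real.exp ((T * μ i) * (Real.exp u - 1)) := by
    intro i u
    have h1 : ∫ ω, Real.exp (u * (y i ω : ℝ)) ∂P
        = ∫ k, Real.exp (u * k) ∂(Measure.map (y i) P) :=
      (integral_map (hmeas i).aemeasurable
        (measurable_from_top (f := fun k : ℕ => Real.exp (u * k))).aestronglyMeasurable).symm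
    rw [h1, hlaw i, my_poisson_exp_int, hr i]
  have hXpt : ∀ (i : Fin n) (v : ℝ) (ω : Ω), Real.exp (v * X i ω)
      = Real.exp (-(v * ((n : ℝ) * w i / T)) * (T * μ i))
        * Real.exp ((v * ((n : ℝ) * w i / T)) * (y i ω : ℝ)) := by
    intro i v ω
    rw [← Real.exp_add]
    simp only [hXdef]
    congr 1
    ring
  have hintX : ∀ (i : Fin n) (v : ℝ), Integrable (fun ω => Real.exp (v * X i ω)) P := by
    intro i v
    rw [funext (hXpt i v)]
    exact (hint_y i _).const_mul _
  have hmgfX : ∀ (i : Fin n) (v : ℝ), mgf (X i) P v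
      = Real.exp ((T * μ i) * (Real.exp (v * ((n : ℝ) * w i / T)) - 1
          - v * ((n : ℝ) * w i / T))) := by
    intro i v
    have h1 : mgf (X i) P v = ∫ ω, Real.exp (v * X i ω) ∂P := rfl
    rw [h1, funext (hXpt i v), integral_const_mul, hEy, ← Real.exp_add]
    congr 1
    ring
  have hS_int : ∀ v : ℝ, Integrable (fun ω => Real.exp (v * (∑ i, X i) ω)) P := fun v =>
    hXindep.integrable_exp_mul_sum hXmeas (fun i _ => hintX i v)
  have hprod : ∀ v : ℝ, v ^ 2 = s ^ 2 → mgf (∑ i, X i) P v ≤ Real.exp (2 * L) := by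
    intro v hv
    rw [hXindep.mgf_sum hXmeas]
    have hstep : ∀ i : Fin n, mgf (X i) P v ≤ Real.exp (s ^ 2 * (n : ℝ) * (w i) ^ 2 / T) := by
      intro i
      rw [hmgfX i v]
      apply Real.exp_le_exp.mpr
      have hu2 : (v * ((n : ℝ) * w i / T)) ^ 2
          = s ^ 2 * ((n : ℝ) ^ 2 * (w i) ^ 2 / T ^ 2) := by
        rw [← hv]; field_simp
      have hu2le : (v * ((n : ℝ) * w i / T)) ^ 2 ≤ 1 := by
        rw [hu2, hs2]
        have h3 : 2 * L * T / M * ((n : ℝ) ^ 2 * (w i) ^ 2 / T ^ 2)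
            ≤ 2 * L * T / M * ((n : ℝ) ^ 2 * (M / n) / T ^ 2) := by
          apply mul_le_mul_of_nonneg_left _ (by positivity)
          apply div_le_div_of_nonneg_right _ (by positivity)
          exact mul_le_mul_of_nonneg_left (hw_i i) (by positivity)
        refine h3.trans ?_
        have heq : 2 * L * T / M * ((n : ℝ) ^ 2 * (M / n) / T ^ 2) = 2 * (n : ℝ) * L / T := by
          field_simp
        rw [heq, div_le_one hT0]
        linarith
      have hu1 : v * ((n : ℝ) * w i / T) ≤ 1 := by
        nlinarith [sq_nonneg (v * ((n : ℝ) * w i / T) - 1)]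
      have hTμ : T * μ i ≤ T / n := by
        calc T * μ i ≤ T * (1 / n) := mul_le_mul_of_nonneg_left (hμ1 i) hT0.le
          _ = T / n := by ring
      calc (T * μ i) * (Real.exp (v * ((n : ℝ) * w i / T)) - 1 - v * ((n : ℝ) * w i / T))
          ≤ (T * μ i) * (v * ((n : ℝ) * w i / T)) ^ 2 :=
            mul_le_mul_of_nonneg_left (my_exp_quad hu1) (hlam0 i)
        _ ≤ (T / n) * (v * ((n : ℝ) * w i / T)) ^ 2 :=
            mul_le_mul_of_nonneg_right hTμ (sq_nonneg _)
        _ = s ^ 2 * (n : ℝ) * (w i) ^ 2 / T := by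
            rw [hu2]; field_simp
    calc ∏ i, mgf (X i) P v ≤ ∏ i, Real.exp (s ^ 2 * (n : ℝ) * (w i) ^ 2 / T) :=
        Finset.prod_le_prod (fun i _ => mgf_nonneg) (fun i _ => hstep i)
      _ = Real.exp (∑ i, s ^ 2 * (n : ℝ) * (w i) ^ 2 / T) := (Real.exp_sum _ _).symm
      _ ≤ Real.exp (2 * L) := by
          apply Real.exp_le_exp.mpr
          have h1 : ∑ i, s ^ 2 * (n : ℝ) * (w i) ^ 2 / T
              = s ^ 2 * (n : ℝ) / T * ∑ i, (w i) ^ 2 := by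
            rw [Finset.mul_sum]
            exact Finset.sum_congr rfl fun i _ => by ring
          rw [h1]
          have h2 : s ^ 2 * (n : ℝ) / T * ∑ i, (w i) ^ 2
              ≤ s ^ 2 * (n : ℝ) / T * (M / n) :=
            mul_le_mul_of_nonneg_left hw (by positivity)
          refine h2.trans (le_of_eq ?_)
          rw [hs2]; field_simp
  have hst : s * (t / 2) = 4 * L := by
    have h1 : s * (t / 2) = t ^ 2 * T / (8 * M) := by rw [hsdef]; ring
    rw [h1, ht2]; field_simp; ring
  have hcomb : ∀ v : ℝ, v ^ 2 = s ^ 2 →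
      Real.exp (-(s * (t / 2))) * mgf (∑ i, X i) P v ≤ Real.exp (-(2 * L)) := by
    intro v hv
    calc Real.exp (-(s * (t / 2))) * mgf (∑ i, X i) P v
        ≤ Real.exp (-(s * (t / 2))) * Real.exp (2 * L) :=
          mul_le_mul_of_nonneg_left (hprod v hv) (Real.exp_pos _).le
      _ = Real.exp (-(s * (t / 2)) + 2 * L) := (Real.exp_add _ _).symm
      _ ≤ Real.exp (-(2 * L)) := Real.exp_le_exp.mpr (by rw [hst]; linarith)
  have hup : P {ω | t / 2 ≤ (∑ i, X i) ω} ≤ ENNReal.ofReal (Real.exp (-(2 * L))) := by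
    rw [ENNReal.le_ofReal_iff_toReal_le (measure_ne_top _ _) (Real.exp_pos _).le]
    refine (measure_ge_le_exp_mul_mgf (μ := P) (X := ∑ i, X i) (t / 2) hs0 (hS_int s)).trans ?_
    have h1 : -s * (t / 2) = -(s * (t / 2)) := by ring
    rw [h1]
    exact hcomb s rfl
  have hlo : P {ω | (∑ i, X i) ω ≤ -(t / 2)} ≤ ENNReal.ofReal (Real.exp (-(2 * L))) := by
    rw [ENNReal.le_ofReal_iff_toReal_le (measure_ne_top _ _) (Real.exp_pos _).le]
    refine (measure_le_le_exp_mul_mgf (μ := P) (X := ∑ i, X i) (-(t / 2))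
      (neg_nonpos.mpr hs0) (hS_int (-s))).trans ?_
    have h1 : -(-s) * -(t / 2) = -(s * (t / 2)) := by ring
    rw [h1]
    exact hcomb (-s) (by ring)
  have hsub : {ω | t / 2 < |∑ i, ((y i ω : ℝ) - T * μ i) * ((n : ℝ) * w i / T)|}
      ⊆ {ω | t / 2 ≤ (∑ i, X i) ω} ∪ {ω | (∑ i, X i) ω ≤ -(t / 2)} := by
    intro ω hω
    simp only [Set.mem_setOf_eq] at hω
    have hSω : (∑ i, X i) ω = ∑ i, ((y i ω : ℝ) - T * μ i) * ((n : ℝ) * w i / T) := by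
      simp [hXdef, Finset.sum_apply]
    rcases lt_abs.mp hω with h | h
    · left; simp only [Set.mem_setOf_eq, hSω]; linarith
    · right; simp only [Set.mem_setOf_eq, hSω]; linarith
  constructor
  · calc P {ω | t / 2 < |∑ i, ((y i ω : ℝ) - T * μ i) * ((n : ℝ) * w i / T)|}
        ≤ P ({ω | t / 2 ≤ (∑ i, X i) ω} ∪ {ω | (∑ i, X i) ω ≤ -(t / 2)}) :=
          measure_mono hsub
      _ ≤ P {ω | t / 2 ≤ (∑ i, X i) ω} + P {ω | (∑ i, X i) ω ≤ -(t / 2)} :=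
          measure_union_le _ _
      _ ≤ ENNReal.ofReal (Real.exp (-(2 * L))) + ENNReal.ofReal (Real.exp (-(2 * L))) :=
          add_le_add hup hlo
      _ = ENNReal.ofReal (2 * Real.exp (-(t ^ 2 * T / (16 * M)))) := by
          rw [← ENNReal.ofReal_add (Real.exp_pos _).le (Real.exp_pos _).le, hexp]; congr 1; ring
  · rw [hexp]
    have hpe : Real.exp L = p := Real.exp_log (by positivity)
    have h1 : Real.exp (-(2 * L)) = ((p : ℝ) ^ 2)⁻¹ := by
      rw [show -(2 * L) = -(L + L) by ring, Real.exp_neg, Real.exp_add, hpe, sq]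
    rw [h1, div_eq_mul_inv]
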